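/- Let q = 2^r with r a positive integer and let a ∈ 𝔽_q^*. Then the number of elements g ∈ SO⁺(2,q) with tr(a·Tr g) = 1 equals (q − 1 − K(λ;a))/2, and the number of elements g ∈ O⁺(2,q) with tr(a·Tr g) = 1 also equals (q − 1 − K(λ;a))/2 (where Tr g is the matrix trace). -/

import Mathlib

open Finset Matrix

/-- The quadratic form `θ⁺(x) = ∑ i, x_i x_{n+i}` on `F^{2n}` (columns indexed by `Fin n ⊕ Fin n`). -/
def thetaPlus (F : Type) [Field F] (n : ℕ) (x : Fin n ⊕ Fin n → F) : F :=
  ∑ i : Fin n, x (Sum.inl i) * x (Sum.inr i)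

/-- The orthogonal group `O⁺(2n,q)`: invertible matrices preserving `θ⁺`. -/
noncomputable def OplusGrp (F : Type) [Field F] [Fintype F] [DecidableEq F] (n : ℕ) :
    Finset (Matrix (Fin n ⊕ Fin n) (Fin n ⊕ Fin n) F) := by
  classical
  exact Finset.univ.filter (fun w => IsUnit w ∧
    ∀ x : Fin n ⊕ Fin n → F, thetaPlus F n (w.mulVec x) = thetaPlus F n x)

/-- `SO⁺(2n,q)`: the kernel of `δ⁺(w) = Tr(B ᵗC)` on `O⁺(2n,q)`,
where `w = [[A,B],[C,D]]` in `n × n` blocks. -/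
noncomputable def SOplusGrp (F : Type) [Field F] [Fintype F] [DecidableEq F] (n : ℕ) :
    Finset (Matrix (Fin n ⊕ Fin n) (Fin n ⊕ Fin n) F) := by
  classical
  exact (OplusGrp F n).filter
    (fun w => Matrix.trace (Matrix.toBlocks₁₂ w * (Matrix.toBlocks₂₁ w)ᵀ) = 0)

/-- The trace map `tr(x) = x + x² + ⋯ + x^{2^{r−1}}`, valued in `𝔽₂ = {0,1} ⊆ F`. -/
def trF (F : Type) [Field F] (r : ℕ) (x : F) : F := ∑ i ∈ Finset.range r, x ^ 2 ^ i

/-- The canonical additive character `λ(x) = (−1)^{tr(x)} ∈ {±1} ⊆ ℤ`. -/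
noncomputable def lam (F : Type) [Field F] (r : ℕ) (x : F) : ℤ := by
  classical exact if trF F r x = 0 then 1 else -1

/-- The trace map `tr` viewed as a function into `𝔽₂ = ZMod 2`. -/
noncomputable def tr2 (F : Type) [Field F] (r : ℕ) (x : F) : ZMod 2 := by
  classical exact if trF F r x = 0 then 0 else 1

/-- The Kloosterman sum `K(λ;a) = ∑_{α ∈ F*} λ(α + aα⁻¹)`. -/
noncomputable def Kl (F : Type) [Field F] [Fintype F] (r : ℕ) (a : F) : ℤ := by
  classical
  exact ∑ α ∈ Finset.univ.filter (fun α : F => α ≠ 0), lam F r (α + a * α⁻¹)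

/-- The `m`-dimensional Kloosterman sum
`K_m(λ;a) = ∑_{α₁,…,α_m ∈ F*} λ(α₁ + ⋯ + α_m + aα₁⁻¹⋯α_m⁻¹)`;
for `m = 0` this is `K₀(λ;a) = λ(a)`. -/
noncomputable def Klm (F : Type) [Field F] [Fintype F] (r m : ℕ) (a : F) : ℤ := by
  classical
  exact ∑ v ∈ Finset.univ.filter (fun v : Fin m → F => ∀ i, v i ≠ 0),
    lam F r ((∑ i, v i) + a * (∏ i, v i)⁻¹)

/-- The power moment `MK^h = ∑_{a ∈ F*} K(λ;a)^h`. -/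
noncomputable def MK (F : Type) [Field F] [Fintype F] (r h : ℕ) : ℤ := by
  classical exact ∑ a ∈ Finset.univ.filter (fun a : F => a ≠ 0), (Kl F r a) ^ h

/-- The power moment `MK₂^h = ∑_{a ∈ F*} K₂(λ;a)^h` of 2-dimensional Kloosterman sums. -/
noncomputable def MK2 (F : Type) [Field F] [Fintype F] (r h : ℕ) : ℤ := by
  classical exact ∑ a ∈ Finset.univ.filter (fun a : F => a ≠ 0), (Klm F r 2 a) ^ h

/-- The binary code `C(G) = {u ∈ 𝔽₂^G : ∑_{g ∈ G} u_g Tr(g) = 0 in F}`. -/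
noncomputable def code (F : Type) [Field F] [Fintype F] [DecidableEq F]
    {ι : Type} [Fintype ι] [DecidableEq ι] (G : Finset (Matrix ι ι F)) :
    Finset (↥G → ZMod 2) := by
  classical
  exact Finset.univ.filter
    (fun u => ∑ g : ↥G, (u g).val • Matrix.trace (g : Matrix ι ι F) = 0)

/-- Number of codewords of Hamming weight `j` in the code `C(G)`. -/
noncomputable def wtCount (F : Type) [Field F] [Fintype F] [DecidableEq F]
    {ι : Type} [Fintype ι] [DecidableEq ι] (G : Finset (Matrix ι ι F)) (j : ℕ) : ℕ := by
  classical
  exact ((code F G).filter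
    (fun u => (Finset.univ.filter (fun g : ↥G => u g = 1)).card = j)).card

/-- `t! · S(h,t)` where `S(h,t)` is the Stirling number of the second kind,
`S(h,t) = (1/t!) ∑_{j=0}^{t} (−1)^{t−j} C(t,j) j^h`. -/
def tS (h t : ℕ) : ℤ :=
  ∑ j ∈ Finset.range (t + 1), (-1 : ℤ) ^ (t - j) * (t.choose j : ℤ) * (j : ℤ) ^ h

/-- Binomial coefficient with integer arguments: `0` whenever `k < 0` or `k > n`. -/
def ichoose (n k : ℤ) : ℤ := if 0 ≤ k ∧ k ≤ n then (n.toNat.choose k.toNat : ℤ) else 0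

section Lemmas
variable (F : Type) [Field F] [Fintype F] (r : ℕ)

theorem charF (hr : 1 ≤ r) (hF : Fintype.card F = 2 ^ r) : CharP F 2 := by
  have h2 : ringChar F = 2 := by
    rw [FiniteField.even_card_iff_char_two, hF, Nat.pow_mod]
    norm_num
    rw [zero_pow (by omega : r ≠ 0)]
    rfl
  exact ringChar.of_eq h2

theorem trF_add [CharP F 2] (x y : F) : trF F r (x + y) = trF F r x + trF F r y := by
  unfold trF
  rw [← Finset.sum_add_distrib]
  exact Finset.sum_congr rfl fun i _ => by rw [add_pow_char_pow]

theorem trF_sq (hF : Fintype.card F = 2 ^ r) (x : F) : trF F r (x ^ 2) = trF F r x := by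
  unfold trF
  have key : ∀ i ∈ Finset.range r, (x ^ 2) ^ 2 ^ i = x ^ 2 ^ (i + 1) := by
    intro i _; rw [← pow_mul, pow_succ, mul_comm (2^i) 2]
  rw [Finset.sum_congr rfl key]
  have h1 := Finset.sum_range_succ' (fun i => x ^ 2 ^ i) r
  have h2 := Finset.sum_range_succ (fun i => x ^ 2 ^ i) r
  have hx : x ^ 2 ^ r = x := by rw [← hF]; exact FiniteField.pow_card x
  simp only [hx, pow_zero, pow_one] at h1 h2
  exact add_right_cancel (h1.symm.trans h2)

theorem trF_sq_self [CharP F 2] (hF : Fintype.card F = 2 ^ r) (x : F) :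
    trF F r x ^ 2 = trF F r x := by
  calc trF F r x ^ 2 = trF F r (x ^ 2) := by
        unfold trF
        rw [sum_pow_char]
        exact Finset.sum_congr rfl fun i _ => by rw [← pow_mul, ← pow_mul, mul_comm]
    _ = trF F r x := trF_sq F r hF x

theorem trF_eq_zero_or_one [CharP F 2] (hF : Fintype.card F = 2 ^ r) (x : F) :
    trF F r x = 0 ∨ trF F r x = 1 := by
  have h := trF_sq_self F r hF x
  have : trF F r x * (trF F r x - 1) = 0 := by
    rw [mul_sub, mul_one, ← sq, h, sub_self]
  rcases mul_eq_zero.mp this with h' | h'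
  · exact Or.inl h'
  · exact Or.inr (by linear_combination h')

end Lemmas
section Mats
variable (F : Type) [Field F] [Fintype F] [DecidableEq F]

/-- diagonal element of O⁺(2,q) -/
def dmat (α : F) : Matrix (Fin 1 ⊕ Fin 1) (Fin 1 ⊕ Fin 1) F :=
  Matrix.fromBlocks (Matrix.of fun _ _ => α) 0 0 (Matrix.of fun _ _ => α⁻¹)

/-- antidiagonal element of O⁺(2,q) -/
def amat (β : F) : Matrix (Fin 1 ⊕ Fin 1) (Fin 1 ⊕ Fin 1) F :=
  Matrix.fromBlocks 0 (Matrix.of fun _ _ => β) (Matrix.of fun _ _ => β⁻¹) 0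

theorem theta_eval (x : Fin 1 ⊕ Fin 1 → F) :
    thetaPlus F 1 x = x (Sum.inl 0) * x (Sum.inr 0) := by
  simp [thetaPlus]

theorem mulVec_eval (w : Matrix (Fin 1 ⊕ Fin 1) (Fin 1 ⊕ Fin 1) F) (x : Fin 1 ⊕ Fin 1 → F)
    (i : Fin 1 ⊕ Fin 1) :
    w.mulVec x i = w i (Sum.inl 0) * x (Sum.inl 0) + w i (Sum.inr 0) * x (Sum.inr 0) := by
  simp [Matrix.mulVec, dotProduct, Fintype.sum_sum_type]

theorem dmat_mem (α : F) (hα : α ≠ 0) : dmat F α ∈ OplusGrp F 1 := by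
  rw [OplusGrp, Finset.mem_filter]
  refine ⟨Finset.mem_univ _, ?_, ?_⟩
  · refine (Matrix.isUnit_iff_isUnit_det _).mpr (Matrix.isUnit_det_of_right_inverse (B := dmat F α⁻¹) ?_)
    ext i j
    rcases i with i | i <;> rcases j with j | j <;>
      simp [dmat, Matrix.mul_apply, Fintype.sum_sum_type, Matrix.one_apply,
        Subsingleton.elim i j, mul_inv_cancel₀ hα, inv_mul_cancel₀ hα, inv_inv]
  · intro x
    rw [theta_eval, theta_eval, mulVec_eval, mulVec_eval]
    simp [dmat]
    field_simp

theorem amat_mem (β : F) (hβ : β ≠ 0) : amat F β ∈ OplusGrp F 1 := by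
  rw [OplusGrp, Finset.mem_filter]
  refine ⟨Finset.mem_univ _, ?_, ?_⟩
  · refine (Matrix.isUnit_iff_isUnit_det _).mpr (Matrix.isUnit_det_of_right_inverse (B := amat F β) ?_)
    ext i j
    rcases i with i | i <;> rcases j with j | j <;>
      simp [amat, Matrix.mul_apply, Fintype.sum_sum_type, Matrix.one_apply,
        Subsingleton.elim i j, mul_inv_cancel₀ hβ, inv_mul_cancel₀ hβ, inv_inv]
  · intro x
    rw [theta_eval, theta_eval, mulVec_eval, mulVec_eval]
    simp [amat]
    field_simp

theorem mem_O_iff (w : Matrix (Fin 1 ⊕ Fin 1) (Fin 1 ⊕ Fin 1) F) [CharP F 2] :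
    w ∈ OplusGrp F 1 ↔
      (∃ α, α ≠ 0 ∧ w = dmat F α) ∨ (∃ β, β ≠ 0 ∧ w = amat F β) := by
  constructor
  · intro hw
    rw [OplusGrp, Finset.mem_filter] at hw
    obtain ⟨-, -, hθ⟩ := hw
    set A := w (Sum.inl 0) (Sum.inl 0) with hA
    set B := w (Sum.inl 0) (Sum.inr 0) with hB
    set C := w (Sum.inr 0) (Sum.inl 0) with hC
    set D := w (Sum.inr 0) (Sum.inr 0) with hD
    have key : ∀ c d : F, (A * c + B * d) * (C * c + D * d) = c * d := by
      intro c d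
      have := hθ (Sum.elim (fun _ => c) (fun _ => d))
      rw [theta_eval, theta_eval, mulVec_eval, mulVec_eval] at this
      simpa using this
    have h10 : A * C = 0 := by have := key 1 0; simpa using this
    have h01 : B * D = 0 := by have := key 0 1; simpa using this
    have h2 : (1 : F) + 1 = 0 := by
      have := CharP.cast_eq_zero F 2
      push_cast at this
      linear_combination this
    have h11 : A * D + B * C = 1 := by
      have hk := key 1 1
      linear_combination hk - h10 - h01
    by_cases hA0 : A = 0
    · right
      have hBC : B * C = 1 := by rw [hA0] at h11; linear_combination h11
      have hBne : B ≠ 0 := fun h => by simp [h] at hBC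
      have hD0 : D = 0 := by
        rcases mul_eq_zero.mp h01 with h | h
        · exact absurd h hBne
        · exact h
      have hCval : C = B⁻¹ := eq_inv_of_mul_eq_one_right (by linear_combination hBC)
      refine ⟨B, hBne, ?_⟩
      ext i j
      rcases i with i | i <;> rcases j with j | j <;>
        obtain rfl : i = 0 := Subsingleton.elim i 0 <;>
        obtain rfl : j = 0 := Subsingleton.elim j 0
      · simpa [amat] using hA0
      · simp [amat, hB]
      · simpa [amat] using hCval
      · simpa [amat] using hD0
    · left
      have hC0 : C = 0 := by
        rcases mul_eq_zero.mp h10 with h | h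
        · exact absurd h hA0
        · exact h
      have hAD : A * D = 1 := by rw [hC0] at h11; linear_combination h11
      have hDval : D = A⁻¹ := eq_inv_of_mul_eq_one_right (by linear_combination hAD)
      have hB0 : B = 0 := by
        have hDne : D ≠ 0 := fun h => by simp [h] at hAD
        rcases mul_eq_zero.mp h01 with h | h
        · exact h
        · exact absurd h hDne
      refine ⟨A, hA0, ?_⟩
      ext i j
      rcases i with i | i <;> rcases j with j | j <;>
        obtain rfl : i = 0 := Subsingleton.elim i 0 <;>
        obtain rfl : j = 0 := Subsingleton.elim j 0
      · simp [dmat, hA]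
      · simpa [dmat] using hB0
      · simpa [dmat] using hC0
      · simpa [dmat] using hDval
  · rintro (⟨α, hα, rfl⟩ | ⟨β, hβ, rfl⟩)
    · exact dmat_mem F α hα
    · exact amat_mem F β hβ

theorem dmat_mem_SO (α : F) (hα : α ≠ 0) : dmat F α ∈ SOplusGrp F 1 := by
  rw [SOplusGrp, Finset.mem_filter]
  refine ⟨dmat_mem F α hα, ?_⟩
  simp [dmat, Matrix.toBlocks₁₂, Matrix.toBlocks₂₁, Matrix.trace, Matrix.mul_apply,
    Matrix.diag]

theorem amat_not_mem_SO (β : F) (hβ : β ≠ 0) : amat F β ∉ SOplusGrp F 1 := by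
  rw [SOplusGrp, Finset.mem_filter]
  rintro ⟨-, h⟩
  simp [amat, Matrix.toBlocks₁₂, Matrix.toBlocks₂₁, Matrix.trace, Matrix.mul_apply,
    Matrix.diag, mul_inv_cancel₀ hβ] at h

theorem mem_SO_iff (w : Matrix (Fin 1 ⊕ Fin 1) (Fin 1 ⊕ Fin 1) F) [CharP F 2] :
    w ∈ SOplusGrp F 1 ↔ (∃ α, α ≠ 0 ∧ w = dmat F α) := by
  constructor
  · intro hw
    have hO : w ∈ OplusGrp F 1 := Finset.mem_of_mem_filter _ hw
    rcases (mem_O_iff F w).mp hO with h | ⟨β, hβ, rfl⟩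
    · exact h
    · exact absurd hw (amat_not_mem_SO F β hβ)
  · rintro ⟨α, hα, rfl⟩; exact dmat_mem_SO F α hα

theorem dmat_trace (α : F) : Matrix.trace (dmat F α) = α + α⁻¹ := by
  simp [dmat, Matrix.trace, Fintype.sum_sum_type, Matrix.diag]

theorem amat_trace (β : F) : Matrix.trace (amat F β) = 0 := by
  simp [amat, Matrix.trace, Fintype.sum_sum_type, Matrix.diag]

end Mats
section Count
variable (F : Type) [Field F] [Fintype F] [DecidableEq F] (r : ℕ)

theorem trF_zero : trF F r 0 = 0 := by
  unfold trF
  refine Finset.sum_eq_zero fun i _ => ?_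
  exact zero_pow (by positivity)

theorem lam_sq (hF : Fintype.card F = 2 ^ r) (x : F) : lam F r (x ^ 2) = lam F r x := by
  unfold lam
  rw [trF_sq F r hF]

theorem Kl_eq_sum (hr : 1 ≤ r) (hF : Fintype.card F = 2 ^ r) (a : F) (ha : a ≠ 0) :
    Kl F r a = ∑ α ∈ Finset.univ.filter (fun α : F => α ≠ 0), lam F r (a * α + a * α⁻¹) := by
  haveI : CharP F 2 := charF F r hr hF
  have Kl_def : Kl F r a
      = ∑ α ∈ Finset.univ.filter (fun α : F => α ≠ 0), lam F r (α + a * α⁻¹) := by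
    rw [Kl, Finset.filter_congr_decidable]
  rw [Kl_def]
  have step1 : ∀ α ∈ Finset.univ.filter (fun α : F => α ≠ 0),
      lam F r (α + a * α⁻¹) = lam F r (α ^ 2 + a ^ 2 * (α ^ 2)⁻¹) := by
    intro α hα
    rw [← lam_sq F r hF (α + a * α⁻¹)]
    congr 1
    rw [add_pow_char, mul_pow, inv_pow]
  rw [Finset.sum_congr rfl step1]
  have step2 : ∑ α ∈ Finset.univ.filter (fun α : F => α ≠ 0),
      lam F r (α ^ 2 + a ^ 2 * (α ^ 2)⁻¹)
      = ∑ β ∈ Finset.univ.filter (fun β : F => β ≠ 0), lam F r (β + a ^ 2 * β⁻¹) := by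
    refine Finset.sum_bij (fun α _ => α ^ 2) ?_ ?_ ?_ ?_
    · intro α hα
      simp only [Finset.mem_filter, Finset.mem_univ, true_and] at hα ⊢
      exact pow_ne_zero 2 hα
    · intro α hα α' hα' h
      have h' : α ^ 2 = α' ^ 2 := h
      have h2 : (α - α') ^ 2 = 0 := by rw [sub_pow_char]; linear_combination h'
      have h3 := pow_eq_zero_iff (n := 2) (by norm_num) |>.mp h2
      exact sub_eq_zero.mp h3
    · intro β hβ
      simp only [Finset.mem_filter, Finset.mem_univ, true_and] at hβ
      obtain ⟨s, hs⟩ := FiniteField.isSquare_of_char_two (by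
        rw [FiniteField.even_card_iff_char_two, hF, Nat.pow_mod]
        norm_num
        rw [zero_pow (by omega : r ≠ 0)]
        rfl) β
      refine ⟨s, ?_, ?_⟩
      · simp only [Finset.mem_filter, Finset.mem_univ, true_and]
        intro h; rw [h] at hs; simp at hs; exact hβ hs
      · show s ^ 2 = β
        rw [hs]; ring
    · intro α hα; rfl
  rw [step2]
  refine Finset.sum_bij' (fun β _ => a⁻¹ * β) (fun γ _ => a * γ) ?_ ?_ ?_ ?_ ?_
  · intro β hβ
    simp only [Finset.mem_filter, Finset.mem_univ, true_and] at hβ ⊢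
    exact mul_ne_zero (inv_ne_zero ha) hβ
  · intro γ hγ
    simp only [Finset.mem_filter, Finset.mem_univ, true_and] at hγ ⊢
    exact mul_ne_zero ha hγ
  · intro β hβ
    show a * (a⁻¹ * β) = β
    field_simp
  · intro γ hγ
    show a⁻¹ * (a * γ) = γ
    field_simp
  · intro β hβ
    simp only [Finset.mem_filter, Finset.mem_univ, true_and] at hβ
    show lam F r (β + a ^ 2 * β⁻¹) = lam F r (a * (a⁻¹ * β) + a * (a⁻¹ * β)⁻¹)
    congr 1
    field_simp

theorem count_main (hr : 1 ≤ r) (hF : Fintype.card F = 2 ^ r) (a : F) (ha : a ≠ 0) :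
    (((Finset.univ.filter (fun α : F => α ≠ 0)).filter
        (fun α => trF F r (a * (α + α⁻¹)) = 1)).card : ℚ) =
      ((2 ^ r : ℚ) - 1 - (Kl F r a : ℚ)) / 2 := by
  haveI : CharP F 2 := charF F r hr hF
  set T := Finset.univ.filter (fun α : F => α ≠ 0) with hT
  set P := fun α : F => trF F r (a * (α + α⁻¹)) = 1 with hP
  have hTcard : T.card = 2 ^ r - 1 := by
    rw [hT, Finset.filter_ne', Finset.card_erase_of_mem (Finset.mem_univ 0),
      Finset.card_univ, hF]
  have hsplit : (T.filter P).card + (T.filter (fun α => ¬ P α)).card = T.card :=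
    Finset.card_filter_add_card_filter_not _
  have hnotP : T.filter (fun α => ¬ P α) = T.filter (fun α => trF F r (a * (α + α⁻¹)) = 0) := by
    refine Finset.filter_congr fun α _ => ?_
    rcases trF_eq_zero_or_one F r hF (a * (α + α⁻¹)) with h | h <;>
      simp [hP, h]
  have hKl : Kl F r a = ((T.filter (fun α => ¬ P α)).card : ℤ) - ((T.filter P).card : ℤ) := by
    rw [Kl_eq_sum F r hr hF a ha]
    have : ∀ α ∈ T, lam F r (a * α + a * α⁻¹) = if P α then (-1 : ℤ) else 1 := by
      intro α hα
      rw [lam, ← mul_add]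
      rcases trF_eq_zero_or_one F r hF (a * (α + α⁻¹)) with h | h
      · have hnp : ¬ P α := by rw [hP]; simp [h]
        rw [if_neg hnp, if_pos h]
      · have hp : P α := by rw [hP]; exact h
        rw [if_pos hp, if_neg (by rw [h]; exact one_ne_zero)]
    rw [Finset.sum_congr rfl this, Finset.sum_ite, Finset.sum_const, Finset.sum_const]
    push_cast
    ring
  have hq : (1 : ℕ) ≤ 2 ^ r := Nat.one_le_two_pow
  have hcast : ((T.filter P).card : ℚ) + ((T.filter (fun α => ¬ P α)).card : ℚ)
      = (2 ^ r : ℚ) - 1 := by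
    have := hsplit
    rw [hTcard] at this
    have := congrArg (fun n : ℕ => (n : ℚ)) this
    push_cast [Nat.cast_sub hq] at this
    convert this using 2 <;> norm_num
  have hKlQ : (Kl F r a : ℚ) = ((T.filter (fun α => ¬ P α)).card : ℚ) - ((T.filter P).card : ℚ) := by
    exact_mod_cast congrArg (fun n : ℤ => (n : ℚ)) hKl
  linarith [hcast, hKlQ]

end Count
theorem stmt17 (r : ℕ) (hr : 1 ≤ r) (F : Type) [Field F] [Fintype F] [DecidableEq F]
    (hF : Fintype.card F = 2 ^ r) (a : F) (ha : a ≠ 0) :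
    ((((SOplusGrp F 1).filter (fun g => trF F r (a * Matrix.trace g) = 1)).card : ℚ) =
      ((2 ^ r : ℚ) - 1 - (Kl F r a : ℚ)) / 2) ∧
    ((((OplusGrp F 1).filter (fun g => trF F r (a * Matrix.trace g) = 1)).card : ℚ) =
      ((2 ^ r : ℚ) - 1 - (Kl F r a : ℚ)) / 2) := by
  haveI : CharP F 2 := charF F r hr hF
  have hSOset : (SOplusGrp F 1).filter (fun g => trF F r (a * Matrix.trace g) = 1)
      = ((Finset.univ.filter (fun α : F => α ≠ 0)).filter
          (fun α => trF F r (a * (α + α⁻¹)) = 1)).image (dmat F) := by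
    ext w
    simp only [Finset.mem_filter, Finset.mem_image, Finset.mem_univ, true_and]
    constructor
    · rintro ⟨hw, hcond⟩
      obtain ⟨α, hα, rfl⟩ := (mem_SO_iff F w).mp hw
      exact ⟨α, ⟨hα, by rwa [dmat_trace] at hcond⟩, rfl⟩
    · rintro ⟨α, ⟨hα, hcond⟩, rfl⟩
      exact ⟨dmat_mem_SO F α hα, by rwa [dmat_trace]⟩
  have dinj : Set.InjOn (dmat F)
      ↑((Finset.univ.filter (fun α : F => α ≠ 0)).filter
          (fun α => trF F r (a * (α + α⁻¹)) = 1)) := by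
    intro x _ y _ h
    have := congrFun (congrFun h (Sum.inl 0)) (Sum.inl 0)
    simpa [dmat] using this
  have hcard1 : (((SOplusGrp F 1).filter
      (fun g => trF F r (a * Matrix.trace g) = 1)).card : ℚ)
      = ((2 ^ r : ℚ) - 1 - (Kl F r a : ℚ)) / 2 := by
    rw [hSOset, Finset.card_image_of_injOn dinj]
    exact count_main F r hr hF a ha
  have hOeq : (OplusGrp F 1).filter (fun g => trF F r (a * Matrix.trace g) = 1)
      = (SOplusGrp F 1).filter (fun g => trF F r (a * Matrix.trace g) = 1) := by
    ext w
    simp only [Finset.mem_filter]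
    constructor
    · rintro ⟨hw, hcond⟩
      refine ⟨?_, hcond⟩
      rcases (mem_O_iff F w).mp hw with ⟨α, hα, rfl⟩ | ⟨β, hβ, rfl⟩
      · exact dmat_mem_SO F α hα
      · exfalso
        rw [amat_trace, mul_zero, trF_zero] at hcond
        exact zero_ne_one hcond
    · rintro ⟨hw, hcond⟩
      exact ⟨Finset.mem_of_mem_filter _ hw, hcond⟩
  exact ⟨hcard1, by rw [hOeq]; exact hcard1⟩
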